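/- Retracting an edge yields the shortest paths of the reduced graph: in the shortest-path program with justifications, after running to exhaustion on a finite edge set E, logically retracting an edge e (killing all constraints whose justification set contains f_e and reviving all remembered constraints whose remembering annotation contains f_e) and re-running to exhaustion produces exactly the constraints p(X,Y,d) where d is the length of the shortest directed path from X to Y in E \ {e}. -/

import Mathlib

variable {V J : Type*} [DecidableEq V] [DecidableEq J]

/-- Constraints of the shortest-path program with justifications. -/
inductive SPC (V J : Type*) where
  | edge (x y : V) (F : Finset J)
  | path (x y : V) (l : ℕ) (F : Finset J)
  | rem (x y : V) (l : ℕ) (Fc F : Finset J)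

/-- A path constraint `p(x,y,l')` with `l' ≤ l` is already present (active or
remembered); firing a propagation producing `p(x,y,l)` is then redundant.
This models the propagation history that makes the program run terminate. -/
def spBlocked (S : Multiset (SPC V J)) (x y : V) (l : ℕ) : Prop :=
  (∃ l' ≤ l, ∃ F, SPC.path x y l' F ∈ S) ∨
  (∃ l' ≤ l, ∃ Fc F, SPC.rem x y l' Fc F ∈ S)

/-- One transition of the translated shortest-path program
(`e(X,Y) ⇒ p(X,Y,1)`, `e(X,Y) ∧ p(Y,Z,L) ⇒ p(X,Z,L+1)`,
`p(X,Y,L1) \ p(X,Y,L2) ⇔ L1 ≤ L2 | true`), with propagation history: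
bodies are annotated with the union of the head justification sets and
removed constraints are remembered via `rem`. -/
def SPStep (S T : Multiset (SPC V J)) : Prop :=
  (∃ (x y : V) (F : Finset J),
      SPC.edge x y F ∈ S ∧ ¬ spBlocked S x y 1 ∧
      T = SPC.path x y 1 F ::ₘ S) ∨
  (∃ (x y z : V) (l : ℕ) (F₁ F₂ : Finset J),
      SPC.edge x y F₁ ∈ S ∧ SPC.path y z l F₂ ∈ S ∧
      ¬ spBlocked S x z (l + 1) ∧
      T = SPC.path x z (l + 1) (F₁ ∪ F₂) ::ₘ S) ∨
  (∃ (x y : V) (l₁ l₂ : ℕ) (F₁ F₂ : Finset J) (G : Multiset (SPC V J)),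
      l₁ ≤ l₂ ∧ S = SPC.path x y l₁ F₁ ::ₘ SPC.path x y l₂ F₂ ::ₘ G ∧
      T = SPC.path x y l₁ F₁ ::ₘ SPC.rem x y l₂ F₂ (F₁ ∪ F₂) ::ₘ G)

/-- The initial state: each edge of `E` annotated with its own distinct
justification. -/
def spInit (E : Finset (V × V)) (fE : V × V → J) : Multiset (SPC V J) :=
  E.val.map fun p => SPC.edge p.1 p.2 {fE p}

/-- Logical retraction of justification `f`: kill every constraint whose
justification set contains `f` and revive every remembered constraint whose
remembering annotation contains `f` (unless its own justification set
contains `f`). -/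
def spRetract (f : J) (S : Multiset (SPC V J)) : Multiset (SPC V J) :=
  S.bind fun a => match a with
    | SPC.edge x y F => if f ∈ F then 0 else {SPC.edge x y F}
    | SPC.path x y l F => if f ∈ F then 0 else {SPC.path x y l F}
    | SPC.rem x y l Fc F =>
        if f ∈ F then (if f ∈ Fc then 0 else {SPC.path x y l Fc})
        else {SPC.rem x y l Fc F}

/-- There is a directed path of (positive) length `L` from `x` to `y` using
edges of `E'`. -/
def IsPathIn (E' : Finset (V × V)) (x y : V) (L : ℕ) : Prop :=
  ∃ vs : List V, vs.Chain' (fun a b => (a, b) ∈ E') ∧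
    vs.head? = some x ∧ vs.getLast? = some y ∧ vs.length = L + 1 ∧ 1 ≤ L

/-- No rule is applicable. -/
def spStuck (S : Multiset (SPC V J)) : Prop := ∀ T, ¬ SPStep S T


/-! ### Auxiliary definitions and lemmas -/
set_option linter.unusedSectionVars false

/-- There is a path from `x` to `y` of length `l` using only edges of `E`
whose justification lies in `F`. -/
def SoundJ (E : Finset (V × V)) (fE : V × V → J) (F : Finset J) (x y : V) (l : ℕ) : Prop :=
  ∃ vs : List V, vs.Chain' (fun a b => (a, b) ∈ E ∧ fE (a, b) ∈ F) ∧
    vs.head? = some x ∧ vs.getLast? = some y ∧ vs.length = l + 1 ∧ 1 ≤ l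

theorem SoundJ.mono {E : Finset (V × V)} {fE : V × V → J} {F F' : Finset J} {x y : V} {l : ℕ}
    (hFF : F ⊆ F') (h : SoundJ E fE F x y l) : SoundJ E fE F' x y l := by
  obtain ⟨vs, hc, h1, h2, h3, h4⟩ := h
  exact ⟨vs, hc.imp (fun a b hab => ⟨hab.1, hFF hab.2⟩), h1, h2, h3, h4⟩

theorem soundJ_single {E : Finset (V × V)} {fE : V × V → J} {F : Finset J} {x y : V}
    (hE : (x, y) ∈ E) (hf : fE (x, y) ∈ F) : SoundJ E fE F x y 1 :=
  ⟨[x, y], by simp [List.Chain', hE, hf], rfl, rfl, rfl, le_refl 1⟩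

theorem SoundJ.cons {E : Finset (V × V)} {fE : V × V → J} {F : Finset J} {x y z : V} {l : ℕ}
    (hE : (x, y) ∈ E) (hf : fE (x, y) ∈ F)
    (h : SoundJ E fE F y z l) : SoundJ E fE F x z (l + 1) := by
  obtain ⟨vs, hc, h1, h2, h3, h4⟩ := h
  cases vs with
  | nil => simp at h1
  | cons b tl =>
    have hb : b = y := by simpa using h1
    subst hb
    refine ⟨x :: b :: tl, List.isChain_cons_cons.mpr ⟨⟨hE, hf⟩, hc⟩, rfl, ?_, by simp at h3 ⊢; omega,
      by omega⟩
    rw [List.getLast?_cons_cons]; exact h2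

theorem SoundJ.isPathIn {E : Finset (V × V)} {fE : V × V → J} {F : Finset J} {x y : V} {l : ℕ}
    (h : SoundJ E fE F x y l) : IsPathIn E x y l := by
  obtain ⟨vs, hc, h1, h2, h3, h4⟩ := h
  exact ⟨vs, hc.imp (fun a b hab => hab.1), h1, h2, h3, h4⟩

theorem SoundJ.erase {E : Finset (V × V)} {fE : V × V → J} {F : Finset J} {x y : V} {l : ℕ}
    {ed : V × V} (hf : fE ed ∉ F) (h : SoundJ E fE F x y l) :
    SoundJ (E.erase ed) fE F x y l := by
  obtain ⟨vs, hc, h1, h2, h3, h4⟩ := h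
  refine ⟨vs, hc.imp (fun a b hab => ⟨Finset.mem_erase.mpr ⟨?_, hab.1⟩, hab.2⟩), h1, h2, h3, h4⟩
  rintro rfl
  exact hf hab.2

theorem isPathIn_elim {E' : Finset (V × V)} {x y : V} {L : ℕ} (h : IsPathIn E' x y L) :
    (L = 1 ∧ (x, y) ∈ E') ∨ ∃ b L', L = L' + 1 ∧ 1 ≤ L' ∧ (x, b) ∈ E' ∧ IsPathIn E' b y L' := by
  obtain ⟨vs, hc, h1, h2, h3, h4⟩ := h
  cases vs with
  | nil => simp at h1
  | cons a tl =>
    have ha : a = x := by simpa using h1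
    subst ha
    cases tl with
    | nil => simp at h3; omega
    | cons b tl' =>
      simp only [List.Chain', List.isChain_cons_cons] at hc
      rw [List.getLast?_cons_cons] at h2
      cases tl' with
      | nil =>
        have hb : b = y := by simpa using h2
        subst hb
        left
        refine ⟨by simp at h3; omega, hc.1⟩
      | cons c tl'' =>
        right
        refine ⟨b, L - 1, by simp at h3; omega, by simp at h3; omega, hc.1,
          ⟨b :: c :: tl'', hc.2, rfl, h2, by simp at h3 ⊢; omega, by simp at h3; omega⟩⟩

theorem pair_decomp {α : Type*} {a b : α} {S : Multiset α} (ha : a ∈ S) (hb : b ∈ S)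
    (hne : a ≠ b) : ∃ G, S = a ::ₘ b ::ₘ G := by
  obtain ⟨G₁, rfl⟩ := Multiset.exists_cons_of_mem ha
  rcases Multiset.mem_cons.mp hb with h | h
  · exact absurd h.symm hne
  · obtain ⟨G₂, rfl⟩ := Multiset.exists_cons_of_mem h
    exact ⟨G₂, rfl⟩

theorem mem_spRetract {f : J} {S : Multiset (SPC V J)} {c : SPC V J} :
    c ∈ spRetract f S ↔ ∃ a ∈ S, c ∈ spRetract f {a} := by
  simp [spRetract, Multiset.mem_bind]

theorem spRetract_cons (f : J) (a : SPC V J) (S : Multiset (SPC V J)) :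
    spRetract f (a ::ₘ S) = spRetract f {a} + spRetract f S := by
  simp [spRetract, Multiset.cons_bind]

theorem spRetract_edge (f : J) (x y : V) (F : Finset J) :
    spRetract f {(SPC.edge x y F : SPC V J)} = if f ∈ F then 0 else {SPC.edge x y F} := by
  simp [spRetract]

theorem spRetract_path (f : J) (x y : V) (l : ℕ) (F : Finset J) :
    spRetract f {(SPC.path x y l F : SPC V J)} = if f ∈ F then 0 else {SPC.path x y l F} := by
  simp [spRetract]

theorem spRetract_rem (f : J) (x y : V) (l : ℕ) (Fc F : Finset J) :
    spRetract f {(SPC.rem x y l Fc F : SPC V J)} =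
      if f ∈ F then (if f ∈ Fc then 0 else {SPC.path x y l Fc})
      else {SPC.rem x y l Fc F} := by
  simp [spRetract]

/-- Invariant maintained by the program runs. -/
structure SPInv (E : Finset (V × V)) (fE : V × V → J) (S : Multiset (SPC V J)) : Prop where
  edge_mem : ∀ x y F, SPC.edge x y F ∈ S → (x, y) ∈ E ∧ F = {fE (x, y)}
  mem_edge : ∀ p ∈ E, SPC.edge p.1 p.2 {fE p} ∈ S
  path_sound : ∀ x y l F, SPC.path x y l F ∈ S → SoundJ E fE F x y l
  rem_sound : ∀ x y l Fc F, SPC.rem x y l Fc F ∈ S → SoundJ E fE Fc x y l ∧ Fc ⊆ F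

/-- Every remembered constraint has an active path witness at most as long. -/
def WWit (S : Multiset (SPC V J)) : Prop :=
  ∀ x y l Fc F, SPC.rem x y l Fc F ∈ S → ∃ l' ≤ l, ∃ F', SPC.path x y l' F' ∈ S

theorem spInv_step {E : Finset (V × V)} {fE : V × V → J} {S T : Multiset (SPC V J)}
    (h : SPInv E fE S) (hs : SPStep S T) : SPInv E fE T := by
  rcases hs with ⟨x, y, F, he, -, rfl⟩ | ⟨x, y, z, l, F₁, F₂, he, hp, -, rfl⟩ |
    ⟨x, y, l₁, l₂, F₁, F₂, G, hle, rfl, rfl⟩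
  · refine ⟨?_, ?_, ?_, ?_⟩
    · intro a b Fa ha
      rcases Multiset.mem_cons.mp ha with h' | h'
      · exact (nomatch h')
      · exact h.edge_mem _ _ _ h'
    · intro p hp
      exact Multiset.mem_cons_of_mem (h.mem_edge p hp)
    · intro a b la Fa ha
      rcases Multiset.mem_cons.mp ha with h' | h'
      · obtain ⟨rfl, rfl, rfl, rfl⟩ : a = x ∧ b = y ∧ la = 1 ∧ Fa = F := by
          injection h' with e1 e2 e3 e4; exact ⟨e1, e2, e3, e4⟩
        obtain ⟨hE, hF⟩ := h.edge_mem _ _ _ he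
        exact soundJ_single hE (by simp [hF])
      · exact h.path_sound _ _ _ _ h'
    · intro a b la Fca Fa ha
      rcases Multiset.mem_cons.mp ha with h' | h'
      · exact (nomatch h')
      · exact h.rem_sound _ _ _ _ _ h'
  · refine ⟨?_, ?_, ?_, ?_⟩
    · intro a b Fa ha
      rcases Multiset.mem_cons.mp ha with h' | h'
      · exact (nomatch h')
      · exact h.edge_mem _ _ _ h'
    · intro p hp
      exact Multiset.mem_cons_of_mem (h.mem_edge p hp)
    · intro a b la Fa ha
      rcases Multiset.mem_cons.mp ha with h' | h'
      · obtain ⟨rfl, rfl, rfl, rfl⟩ : a = x ∧ b = z ∧ la = l + 1 ∧ Fa = F₁ ∪ F₂ := by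
          injection h' with e1 e2 e3 e4; exact ⟨e1, e2, e3, e4⟩
        obtain ⟨hE, hF⟩ := h.edge_mem _ _ _ he
        have hsy := (h.path_sound _ _ _ _ hp).mono (Finset.subset_union_right (s₁ := F₁))
        exact hsy.cons hE (by simp [hF])
      · exact h.path_sound _ _ _ _ h'
    · intro a b la Fca Fa ha
      rcases Multiset.mem_cons.mp ha with h' | h'
      · exact (nomatch h')
      · exact h.rem_sound _ _ _ _ _ h'
  · have hp1 : SPC.path x y l₁ F₁ ∈ SPC.path x y l₁ F₁ ::ₘ SPC.path x y l₂ F₂ ::ₘ G :=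
      Multiset.mem_cons_self _ _
    have hp2 : SPC.path x y l₂ F₂ ∈ SPC.path x y l₁ F₁ ::ₘ SPC.path x y l₂ F₂ ::ₘ G :=
      Multiset.mem_cons_of_mem (Multiset.mem_cons_self _ _)
    refine ⟨?_, ?_, ?_, ?_⟩
    · intro a b Fa ha
      rcases Multiset.mem_cons.mp ha with h' | h'
      · exact (nomatch h')
      rcases Multiset.mem_cons.mp h' with h'' | h''
      · exact (nomatch h'')
      · exact h.edge_mem _ _ _ (Multiset.mem_cons_of_mem (Multiset.mem_cons_of_mem h''))
    · intro p hp
      have := h.mem_edge p hp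
      rcases Multiset.mem_cons.mp this with h' | h'
      · exact (nomatch h')
      rcases Multiset.mem_cons.mp h' with h'' | h''
      · exact (nomatch h'')
      · exact Multiset.mem_cons_of_mem (Multiset.mem_cons_of_mem h'')
    · intro a b la Fa ha
      rcases Multiset.mem_cons.mp ha with h' | h'
      · obtain ⟨rfl, rfl, rfl, rfl⟩ : a = x ∧ b = y ∧ la = l₁ ∧ Fa = F₁ := by
          injection h' with e1 e2 e3 e4; exact ⟨e1, e2, e3, e4⟩
        exact h.path_sound _ _ _ _ hp1
      rcases Multiset.mem_cons.mp h' with h'' | h''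
      · exact (nomatch h'')
      · exact h.path_sound _ _ _ _ (Multiset.mem_cons_of_mem (Multiset.mem_cons_of_mem h''))
    · intro a b la Fca Fa ha
      rcases Multiset.mem_cons.mp ha with h' | h'
      · exact (nomatch h')
      rcases Multiset.mem_cons.mp h' with h'' | h''
      · obtain ⟨rfl, rfl, rfl, rfl, rfl⟩ : a = x ∧ b = y ∧ la = l₂ ∧ Fca = F₂ ∧ Fa = F₁ ∪ F₂ := by
          injection h'' with e1 e2 e3 e4 e5; exact ⟨e1, e2, e3, e4, e5⟩
        exact ⟨h.path_sound _ _ _ _ hp2, Finset.subset_union_right⟩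
      · exact h.rem_sound _ _ _ _ _ (Multiset.mem_cons_of_mem (Multiset.mem_cons_of_mem h''))

theorem wWit_step {S T : Multiset (SPC V J)} (h : WWit S) (hs : SPStep S T) : WWit T := by
  rcases hs with ⟨x, y, F, he, -, rfl⟩ | ⟨x, y, z, l, F₁, F₂, he, hp, -, rfl⟩ |
    ⟨x, y, l₁, l₂, F₁, F₂, G, hle, rfl, rfl⟩
  · intro a b la Fca Fa ha
    rcases Multiset.mem_cons.mp ha with h' | h'
    · exact (nomatch h')
    · obtain ⟨l', hl', F', hF'⟩ := h _ _ _ _ _ h'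
      exact ⟨l', hl', F', Multiset.mem_cons_of_mem hF'⟩
  · intro a b la Fca Fa ha
    rcases Multiset.mem_cons.mp ha with h' | h'
    · exact (nomatch h')
    · obtain ⟨l', hl', F', hF'⟩ := h _ _ _ _ _ h'
      exact ⟨l', hl', F', Multiset.mem_cons_of_mem hF'⟩
  · intro a b la Fca Fa ha
    rcases Multiset.mem_cons.mp ha with h' | h'
    · exact (nomatch h')
    rcases Multiset.mem_cons.mp h' with h'' | h''
    · obtain ⟨rfl, rfl, rfl, rfl, rfl⟩ : a = x ∧ b = y ∧ la = l₂ ∧ Fca = F₂ ∧ Fa = F₁ ∪ F₂ := by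
        injection h'' with e1 e2 e3 e4 e5; exact ⟨e1, e2, e3, e4, e5⟩
      exact ⟨l₁, hle, F₁, Multiset.mem_cons_self _ _⟩
    · obtain ⟨l', hl', F', hF'⟩ :=
        h _ _ _ _ _ (Multiset.mem_cons_of_mem (Multiset.mem_cons_of_mem h''))
      rcases Multiset.mem_cons.mp hF' with hq | hq
      · exact ⟨l', hl', F', by rw [hq]; exact Multiset.mem_cons_self _ _⟩
      rcases Multiset.mem_cons.mp hq with hq' | hq'
      · -- the witness was the removed path; use the kept one
        obtain ⟨rfl, rfl, el, eF⟩ : a = x ∧ b = y ∧ l' = l₂ ∧ F' = F₂ := by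
          injection hq' with e1 e2 e3 e4; exact ⟨e1, e2, e3, e4⟩
        exact ⟨l₁, le_trans (le_trans hle el.ge) hl', F₁, Multiset.mem_cons_self _ _⟩
      · exact ⟨l', hl', F', Multiset.mem_cons_of_mem (Multiset.mem_cons_of_mem hq')⟩

theorem blocked_path {S : Multiset (SPC V J)} (hw : WWit S) {x y : V} {l : ℕ}
    (h : spBlocked S x y l) : ∃ l' ≤ l, ∃ F, SPC.path x y l' F ∈ S := by
  rcases h with ⟨l', hl', F, hF⟩ | ⟨l', hl', Fc, F, hF⟩
  · exact ⟨l', hl', F, hF⟩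
  · obtain ⟨l'', hl'', F', h'⟩ := hw _ _ _ _ _ hF
    exact ⟨l'', le_trans hl'' hl', F', h'⟩

theorem stuck_blocked_p1 {S : Multiset (SPC V J)} (hstuck : spStuck S) {x y : V} {F : Finset J}
    (he : SPC.edge x y F ∈ S) : spBlocked S x y 1 := by
  by_contra hb
  exact hstuck _ (Or.inl ⟨x, y, F, he, hb, rfl⟩)

theorem stuck_blocked_pp {S : Multiset (SPC V J)} (hstuck : spStuck S) {x y z : V} {l : ℕ}
    {F₁ F₂ : Finset J} (he : SPC.edge x y F₁ ∈ S) (hp : SPC.path y z l F₂ ∈ S) :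
    spBlocked S x z (l + 1) := by
  by_contra hb
  exact hstuck _ (Or.inr (Or.inl ⟨x, y, z, l, F₁, F₂, he, hp, hb, rfl⟩))

theorem stuck_path_unique {S : Multiset (SPC V J)} (hstuck : spStuck S) {x y : V}
    {l₁ l₂ : ℕ} {F₁ F₂ : Finset J}
    (h₁ : SPC.path x y l₁ F₁ ∈ S) (h₂ : SPC.path x y l₂ F₂ ∈ S) : l₁ = l₂ := by
  by_contra hne
  rcases lt_or_gt_of_ne hne with hlt | hlt
  · have hv : (SPC.path x y l₁ F₁ : SPC V J) ≠ SPC.path x y l₂ F₂ := by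
      intro hh; injection hh with e1 e2 e3 e4; omega
    obtain ⟨G, rfl⟩ := pair_decomp h₁ h₂ hv
    exact hstuck _ (Or.inr (Or.inr ⟨x, y, l₁, l₂, F₁, F₂, G, le_of_lt hlt, rfl, rfl⟩))
  · have hv : (SPC.path x y l₂ F₂ : SPC V J) ≠ SPC.path x y l₁ F₁ := by
      intro hh; injection hh with e1 e2 e3 e4; omega
    obtain ⟨G, rfl⟩ := pair_decomp h₂ h₁ hv
    exact hstuck _ (Or.inr (Or.inr ⟨x, y, l₂, l₁, F₂, F₁, G, le_of_lt hlt, rfl, rfl⟩))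

theorem edge_mem_spRetract {f : J} {S : Multiset (SPC V J)} {x y : V} {F : Finset J}
    (h : SPC.edge x y F ∈ spRetract f S) : SPC.edge x y F ∈ S ∧ f ∉ F := by
  obtain ⟨a, ha, hc⟩ := mem_spRetract.mp h
  cases a with
  | edge a b Fa =>
    rw [spRetract_edge] at hc
    split_ifs at hc with hf
    · simp at hc
    · obtain ⟨rfl, rfl, rfl⟩ : x = a ∧ y = b ∧ F = Fa := by
        injection Multiset.mem_singleton.mp hc with e1 e2 e3; exact ⟨e1, e2, e3⟩
      exact ⟨ha, hf⟩
  | path a b la Fa =>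
    rw [spRetract_path] at hc
    split_ifs at hc
    · simp at hc
    · exact (nomatch (Multiset.mem_singleton.mp hc))
  | rem a b la Fca Fa =>
    rw [spRetract_rem] at hc
    split_ifs at hc
    · simp at hc
    · exact (nomatch (Multiset.mem_singleton.mp hc))
    · exact (nomatch (Multiset.mem_singleton.mp hc))

theorem path_mem_spRetract {f : J} {S : Multiset (SPC V J)} {x y : V} {l : ℕ} {F : Finset J}
    (h : SPC.path x y l F ∈ spRetract f S) :
    (SPC.path x y l F ∈ S ∧ f ∉ F) ∨ (∃ F', SPC.rem x y l F F' ∈ S ∧ f ∈ F' ∧ f ∉ F) := by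
  obtain ⟨a, ha, hc⟩ := mem_spRetract.mp h
  cases a with
  | edge a b Fa =>
    rw [spRetract_edge] at hc
    split_ifs at hc
    · simp at hc
    · exact (nomatch (Multiset.mem_singleton.mp hc))
  | path a b la Fa =>
    rw [spRetract_path] at hc
    split_ifs at hc with hf
    · simp at hc
    · obtain ⟨rfl, rfl, rfl, rfl⟩ : x = a ∧ y = b ∧ l = la ∧ F = Fa := by
        injection Multiset.mem_singleton.mp hc with e1 e2 e3 e4; exact ⟨e1, e2, e3, e4⟩
      exact Or.inl ⟨ha, hf⟩
  | rem a b la Fca Fa =>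
    rw [spRetract_rem] at hc
    split_ifs at hc with hf hfc
    · simp at hc
    · obtain ⟨rfl, rfl, rfl, rfl⟩ : x = a ∧ y = b ∧ l = la ∧ F = Fca := by
        injection Multiset.mem_singleton.mp hc with e1 e2 e3 e4; exact ⟨e1, e2, e3, e4⟩
      exact Or.inr ⟨Fa, ha, hf, hfc⟩
    · exact (nomatch (Multiset.mem_singleton.mp hc))

theorem rem_mem_spRetract {f : J} {S : Multiset (SPC V J)} {x y : V} {l : ℕ} {Fc F : Finset J}
    (h : SPC.rem x y l Fc F ∈ spRetract f S) : SPC.rem x y l Fc F ∈ S ∧ f ∉ F := by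
  obtain ⟨a, ha, hc⟩ := mem_spRetract.mp h
  cases a with
  | edge a b Fa =>
    rw [spRetract_edge] at hc
    split_ifs at hc
    · simp at hc
    · exact (nomatch (Multiset.mem_singleton.mp hc))
  | path a b la Fa =>
    rw [spRetract_path] at hc
    split_ifs at hc
    · simp at hc
    · exact (nomatch (Multiset.mem_singleton.mp hc))
  | rem a b la Fca Fa =>
    rw [spRetract_rem] at hc
    split_ifs at hc with hf hfc
    · simp at hc
    · exact (nomatch (Multiset.mem_singleton.mp hc))
    · obtain ⟨rfl, rfl, rfl, rfl, rfl⟩ : x = a ∧ y = b ∧ l = la ∧ Fc = Fca ∧ F = Fa := by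
        injection Multiset.mem_singleton.mp hc with e1 e2 e3 e4 e5; exact ⟨e1, e2, e3, e4, e5⟩
      exact ⟨ha, hf⟩

theorem spInv_retract {E : Finset (V × V)} {fE : V × V → J} (hinj : Function.Injective fE)
    {ed : V × V} {S : Multiset (SPC V J)} (h : SPInv E fE S) :
    SPInv (E.erase ed) fE (spRetract (fE ed) S) := by
  constructor
  · intro x y F hx
    obtain ⟨hS, hf⟩ := edge_mem_spRetract hx
    obtain ⟨hE, rfl⟩ := h.edge_mem _ _ _ hS
    refine ⟨Finset.mem_erase.mpr ⟨?_, hE⟩, rfl⟩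
    rintro rfl
    exact hf (Finset.mem_singleton_self _)
  · intro p hp
    have hpE := Finset.mem_of_mem_erase hp
    have hne := Finset.ne_of_mem_erase hp
    refine mem_spRetract.mpr ⟨_, h.mem_edge p hpE, ?_⟩
    rw [spRetract_edge, if_neg]
    · exact Multiset.mem_singleton.mpr rfl
    · simp only [Finset.mem_singleton]
      exact fun hh => hne (hinj hh.symm)
  · intro x y l F hx
    rcases path_mem_spRetract hx with ⟨hS, hf⟩ | ⟨F', hS, _, hf⟩
    · exact (h.path_sound _ _ _ _ hS).erase hf
    · exact (h.rem_sound _ _ _ _ _ hS).1.erase hf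
  · intro x y l Fc F hx
    obtain ⟨hS, hf⟩ := rem_mem_spRetract hx
    obtain ⟨hs, hsub⟩ := h.rem_sound _ _ _ _ _ hS
    exact ⟨hs.erase (fun hc => hf (hsub hc)), hsub⟩

/-- After retracting any justification, every surviving remembered constraint
still has a surviving active path witness. -/
def RWit (S : Multiset (SPC V J)) : Prop := ∀ f : J, WWit (spRetract f S)

theorem rem_not_mem_spRetract_path {f : J} {x y : V} {l : ℕ} {F : Finset J}
    {a b : V} {la : ℕ} {Fca Fa : Finset J} :
    SPC.rem a b la Fca Fa ∉ spRetract f {(SPC.path x y l F : SPC V J)} := by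
  rw [spRetract_path]
  split_ifs
  · simp
  · intro hc
    exact (nomatch (Multiset.mem_singleton.mp hc))

theorem rWit_step {S T : Multiset (SPC V J)} (h : RWit S) (hs : SPStep S T) : RWit T := by
  rcases hs with ⟨x, y, F, he, -, rfl⟩ | ⟨x, y, z, l, F₁, F₂, he, hp, -, rfl⟩ |
    ⟨x, y, l₁, l₂, F₁, F₂, G, hle, rfl, rfl⟩
  · intro f a b la Fca Fa ha
    rw [spRetract_cons] at ha
    rcases Multiset.mem_add.mp ha with h' | h'
    · exact absurd h' rem_not_mem_spRetract_path
    · obtain ⟨l', hl', F', hF'⟩ := h f _ _ _ _ _ h'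
      exact ⟨l', hl', F', by rw [spRetract_cons]; exact Multiset.mem_add.mpr (Or.inr hF')⟩
  · intro f a b la Fca Fa ha
    rw [spRetract_cons] at ha
    rcases Multiset.mem_add.mp ha with h' | h'
    · exact absurd h' rem_not_mem_spRetract_path
    · obtain ⟨l', hl', F', hF'⟩ := h f _ _ _ _ _ h'
      exact ⟨l', hl', F', by rw [spRetract_cons]; exact Multiset.mem_add.mpr (Or.inr hF')⟩
  · intro f a b la Fca Fa ha
    rw [spRetract_cons, spRetract_cons] at ha
    have hmemT : ∀ c : SPC V J,
        c ∈ spRetract f {(SPC.path x y l₁ F₁ : SPC V J)} ∨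
        c ∈ spRetract f {(SPC.rem x y l₂ F₂ (F₁ ∪ F₂) : SPC V J)} ∨
        c ∈ spRetract f G →
        c ∈ spRetract f
          (SPC.path x y l₁ F₁ ::ₘ SPC.rem x y l₂ F₂ (F₁ ∪ F₂) ::ₘ G) := by
      intro c hc
      rw [spRetract_cons, spRetract_cons]
      rcases hc with hc | hc | hc
      · exact Multiset.mem_add.mpr (Or.inl hc)
      · exact Multiset.mem_add.mpr (Or.inr (Multiset.mem_add.mpr (Or.inl hc)))
      · exact Multiset.mem_add.mpr (Or.inr (Multiset.mem_add.mpr (Or.inr hc)))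
    rcases Multiset.mem_add.mp ha with h' | h'
    · exact absurd h' rem_not_mem_spRetract_path
    rcases Multiset.mem_add.mp h' with h'' | h''
    · -- the new rem survived the retraction
      rw [spRetract_rem] at h''
      split_ifs at h'' with hf hfc
      · simp at h''
      · exact (nomatch (Multiset.mem_singleton.mp h''))
      · obtain ⟨rfl, rfl, rfl, rfl, rfl⟩ :
            a = x ∧ b = y ∧ la = l₂ ∧ Fca = F₂ ∧ Fa = F₁ ∪ F₂ := by
          injection Multiset.mem_singleton.mp h'' with e1 e2 e3 e4 e5
          exact ⟨e1, e2, e3, e4, e5⟩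
        have hf1 : f ∉ F₁ := fun hc => hf (Finset.mem_union_left _ hc)
        refine ⟨l₁, hle, F₁, hmemT _ (Or.inl ?_)⟩
        rw [spRetract_path, if_neg hf1]
        exact Multiset.mem_singleton.mpr rfl
    · -- an old rem: use the witness in `spRetract f S`
      have haS : SPC.rem a b la Fca Fa ∈
          spRetract f (SPC.path x y l₁ F₁ ::ₘ SPC.path x y l₂ F₂ ::ₘ G) := by
        rw [spRetract_cons, spRetract_cons]
        exact Multiset.mem_add.mpr (Or.inr (Multiset.mem_add.mpr (Or.inr h'')))
      obtain ⟨l', hl', F', hF'⟩ := h f _ _ _ _ _ haS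
      rw [spRetract_cons, spRetract_cons] at hF'
      rcases Multiset.mem_add.mp hF' with hq | hq
      · exact ⟨l', hl', F', hmemT _ (Or.inl hq)⟩
      rcases Multiset.mem_add.mp hq with hq' | hq'
      · -- witness was the removed path occurrence
        rw [spRetract_path] at hq'
        split_ifs at hq' with hf2
        · simp at hq'
        obtain ⟨rfl, rfl, e3, e4⟩ : a = x ∧ b = y ∧ l' = l₂ ∧ F' = F₂ := by
          injection Multiset.mem_singleton.mp hq' with e1 e2 e3 e4
          exact ⟨e1, e2, e3, e4⟩
        by_cases hf1 : f ∈ F₁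
        · -- the new rem revives exactly this path
          refine ⟨l', hl', F', hmemT _ (Or.inr (Or.inl ?_))⟩
          rw [spRetract_rem, if_pos (Finset.mem_union_left _ hf1),
            if_neg (e4 ▸ hf2)]
          exact Multiset.mem_singleton.mpr (by rw [e3, e4])
        · -- the kept path survives and is at most as long
          refine ⟨l₁, le_trans (e3 ▸ hle) hl', F₁, hmemT _ (Or.inl ?_)⟩
          rw [spRetract_path, if_neg hf1]
          exact Multiset.mem_singleton.mpr rfl
      · exact ⟨l', hl', F', hmemT _ (Or.inr (Or.inr hq'))⟩

theorem spInv_init (E : Finset (V × V)) (fE : V × V → J) : SPInv E fE (spInit E fE) := by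
  constructor
  · intro x y F hx
    obtain ⟨p, hp, he⟩ := Multiset.mem_map.mp hx
    obtain ⟨e1, e2, e3⟩ : p.1 = x ∧ p.2 = y ∧ ({fE p} : Finset J) = F := by
      injection he with e1 e2 e3; exact ⟨e1, e2, e3⟩
    have hpx : p = (x, y) := by rw [← e1, ← e2]
    subst hpx
    exact ⟨hp, e3.symm⟩
  · intro p hp
    exact Multiset.mem_map.mpr ⟨p, hp, rfl⟩
  · intro x y l F hx
    obtain ⟨p, hp, he⟩ := Multiset.mem_map.mp hx
    exact (nomatch he)
  · intro x y l Fc F hx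
    obtain ⟨p, hp, he⟩ := Multiset.mem_map.mp hx
    exact (nomatch he)

theorem rWit_init (E : Finset (V × V)) (fE : V × V → J) : RWit (spInit E fE) := by
  intro f x y l Fc F hx
  exact absurd (rem_mem_spRetract hx).1 (by
    intro hc
    obtain ⟨p, hp, he⟩ := Multiset.mem_map.mp hc
    exact (nomatch he))

theorem complete_of_stuck {E' : Finset (V × V)} {fE : V × V → J} {T : Multiset (SPC V J)}
    (hstuck : spStuck T) (hinv : SPInv E' fE T) (hw : WWit T) :
    ∀ L, ∀ x y : V, IsPathIn E' x y L → ∃ l ≤ L, ∃ F, SPC.path x y l F ∈ T := by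
  intro L
  induction L using Nat.strong_induction_on with
  | _ L ih =>
    intro x y hp
    rcases isPathIn_elim hp with ⟨rfl, hE⟩ | ⟨b, L', rfl, hL', hE, hp'⟩
    · exact blocked_path hw (stuck_blocked_p1 hstuck (hinv.mem_edge (x, y) hE))
    · obtain ⟨l, hl, F, hF⟩ := ih L' (by omega) b y hp'
      obtain ⟨l'', hl'', F'', h''⟩ :=
        blocked_path hw (stuck_blocked_pp hstuck (hinv.mem_edge (x, b) hE) hF)
      exact ⟨l'', by omega, F'', h''⟩
/-- Retracting an edge yields the shortest paths of the reduced graph: after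
running the shortest-path program to exhaustion on the finite edge set `E`,
logically retracting the edge `ed` and re-running to exhaustion produces
exactly the constraints `p(x,y,d)` where `d` is the length of the shortest
directed path from `x` to `y` in `E \ {ed}`. -/
theorem sp_retract_edge_correct (E : Finset (V × V)) (fE : V × V → J)
    (hinj : Function.Injective fE) (ed : V × V) (hed : ed ∈ E)
    (S : Multiset (SPC V J))
    (hreach : Relation.ReflTransGen SPStep (spInit E fE) S)
    (hstuck : spStuck S)
    (T : Multiset (SPC V J))
    (hreach' : Relation.ReflTransGen SPStep (spRetract (fE ed) S) T)
    (hstuck' : spStuck T) :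
    ∀ (x y : V) (d : ℕ),
      (∃ F, SPC.path x y d F ∈ T) ↔
      (IsPathIn (E.erase ed) x y d ∧
        ∀ d', IsPathIn (E.erase ed) x y d' → d ≤ d') := by
  have run1 : ∀ {A B : Multiset (SPC V J)}, Relation.ReflTransGen SPStep A B →
      SPInv E fE A ∧ RWit A → SPInv E fE B ∧ RWit B := by
    intro A B h
    induction h with
    | refl => exact id
    | tail _ hstep ih =>
      intro hA
      obtain ⟨h1, h2⟩ := ih hA
      exact ⟨spInv_step h1 hstep, rWit_step h2 hstep⟩
  obtain ⟨hinvS, hrwS⟩ := run1 hreach ⟨spInv_init E fE, rWit_init E fE⟩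
  have run2 : ∀ {A B : Multiset (SPC V J)}, Relation.ReflTransGen SPStep A B →
      (SPInv (E.erase ed) fE A ∧ WWit A) → SPInv (E.erase ed) fE B ∧ WWit B := by
    intro A B h
    induction h with
    | refl => exact id
    | tail _ hstep ih =>
      intro hA
      obtain ⟨h1, h2⟩ := ih hA
      exact ⟨spInv_step h1 hstep, wWit_step h2 hstep⟩
  obtain ⟨hinvT, hwT⟩ :=
    run2 hreach' ⟨spInv_retract hinj hinvS, hrwS (fE ed)⟩
  intro x y d
  constructor
  · rintro ⟨F, hF⟩
    refine ⟨(hinvT.path_sound _ _ _ _ hF).isPathIn, ?_⟩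
    intro d' hd'
    obtain ⟨l, hl, F', hF'⟩ := complete_of_stuck hstuck' hinvT hwT d' x y hd'
    have := stuck_path_unique hstuck' hF hF'
    omega
  · rintro ⟨hpath, hmin⟩
    obtain ⟨l, hl, F, hF⟩ := complete_of_stuck hstuck' hinvT hwT d x y hpath
    have h1 := hmin l (hinvT.path_sound _ _ _ _ hF).isPathIn
    have h2 : l = d := by omega
    exact ⟨F, h2 ▸ hF⟩
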